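/- Let (L, ‖·‖) be a lattice over A = k[t] of rank n with successive minima r₁ ≤ ... ≤ r_n, and let b₁,...,b_n ∈ L be A-linearly independent with ‖b_i‖ = r_i for all i. Then (b₁,...,b_n) is a reduced basis of L; in particular it generates L as an A-module. -/

import Mathlib

/-- The degree function on `A = k[t]`, with `deg 0 = -∞`, valued in `ℝ ∪ {-∞}`. -/
noncomputable def degA {k : Type*} [Field k] (a : Polynomial k) : WithBot ℝ :=
  WithBot.map (fun n : ℕ => (n : ℝ)) a.degree

namespace Stmt7Aux

open Polynomial

lemma sum_dite_lt {M : Type*} [AddCommMonoid M] {n m : ℕ} (h : m ≤ n)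
    (f : ∀ i : ℕ, i < m → M) :
    (∑ i : Fin n, if hi : (i : ℕ) < m then f i hi else 0) = ∑ l : Fin m, f l l.2 := by
  classical
  set F : ℕ → M := fun i => if hi : i < m then f i hi else 0 with hF
  have h1 : (∑ i : Fin n, if hi : (i : ℕ) < m then f i hi else 0) = ∑ i ∈ Finset.range n, F i := by
    rw [← Fin.sum_univ_eq_sum_range F n]
  have h2 : ∑ i ∈ Finset.range m, F i = ∑ i ∈ Finset.range n, F i := by
    apply Finset.sum_subset (Finset.range_subset_range.2 h)
    intro x _ hx
    rw [Finset.mem_range, not_lt] at hx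
    exact dif_neg (not_lt.2 hx)
  have h3 : (∑ l : Fin m, f l l.2) = ∑ i ∈ Finset.range m, F i := by
    rw [← Fin.sum_univ_eq_sum_range F m]
    exact Finset.sum_congr rfl (fun l _ => (dif_pos l.2).symm)
  rw [h1, ← h2, h3]


variable {k : Type*} [Field k]

lemma degA_zero : degA (0 : Polynomial k) = ⊥ := by simp [degA]

lemma degA_of_ne {a : Polynomial k} (h : a ≠ 0) :
    degA a = ((a.natDegree : ℝ) : WithBot ℝ) := by
  unfold degA
  rw [degree_eq_natDegree h, Nat.cast_withBot, WithBot.map_coe]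

lemma degA_X_pow (d : ℕ) : degA ((X : Polynomial k)^d) = ((d : ℝ) : WithBot ℝ) := by
  unfold degA
  rw [degree_X_pow, Nat.cast_withBot, WithBot.map_coe]

lemma degA_neg_one : degA (-1 : Polynomial k) = ((0:ℝ) : WithBot ℝ) := by
  rw [degA_of_ne (by simp : (-1 : Polynomial k) ≠ 0)]
  simp

variable {L : Type*} [AddCommGroup L] [Module (Polynomial k) L]
variable {N : L → WithBot ℝ}

section N
variable (hadd : ∀ x y : L, N (x + y) ≤ max (N x) (N y))
  (hsmul : ∀ (a : Polynomial k) (x : L), N (a • x) = degA a + N x)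
  (hzero : ∀ x : L, N x = ⊥ ↔ x = 0)

include hzero in
lemma N_zero : N (0 : L) = ⊥ := (hzero 0).2 rfl

include hsmul in
lemma N_neg (y : L) : N (-y) = N y := by
  have h : (-y) = (-1 : Polynomial k) • y := by simp
  rw [h, hsmul, degA_neg_one, WithBot.coe_zero, zero_add]

include hadd hzero in
lemma N_sum_le {ι : Type*} (s : Finset ι) (f : ι → L) :
    N (∑ i ∈ s, f i) ≤ s.sup (fun i => N (f i)) := by
  classical
  induction s using Finset.cons_induction with
  | empty => simp [N_zero hzero]
  | cons a s ha ih =>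
    rw [Finset.sum_cons, Finset.sup_cons]
    exact le_trans (hadd _ _) (max_le_max le_rfl ih)

include hadd hsmul in
lemma N_add_eq {x y : L} (h : N y < N x) : N (x + y) = N x := by
  refine le_antisymm (le_trans (hadd x y) (max_le le_rfl h.le)) ?_
  have h2 : N x ≤ max (N (x + y)) (N y) := by
    have := hadd (x + y) (-y)
    rw [add_neg_cancel_right, N_neg hsmul] at this
    exact this
  rcases max_cases (N (x+y)) (N y) with ⟨he, _⟩ | ⟨he, hlt⟩
  · rw [he] at h2; exact h2
  · rw [he] at h2; exact absurd (lt_of_le_of_lt h2 h) (lt_irrefl _)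

end N

lemma reduced {n : ℕ} {b : Fin n → L}
    (hadd : ∀ x y : L, N (x + y) ≤ max (N x) (N y))
    (hsmul : ∀ (a : Polynomial k) (x : L), N (a • x) = degA a + N x)
    (hzero : ∀ x : L, N x = ⊥ ↔ x = 0)
    (hb : LinearIndependent (Polynomial k) b)
    {r : Fin n → ℝ} (hr : ∀ i, N (b i) = ((r i : ℝ) : WithBot ℝ)) (hmono : Monotone r)
    (hmin : ∀ (i : Fin n) (x : Fin (i.1 + 1) → L), LinearIndependent (Polynomial k) x →
      ((r i : ℝ) : WithBot ℝ) ≤ Finset.univ.sup (fun j => N (x j)))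
    (hkey : ∀ (w : L) (c : Fin n → Polynomial k) (e : Polynomial k), e ≠ 0 →
      e • w = ∑ i, c i • b i → ∀ j : Fin n, c j ≠ 0 → ((r j : ℝ) : WithBot ℝ) ≤ N w)
    (c : Fin n → Polynomial k) :
    N (∑ i, c i • b i) = Finset.univ.sup (fun i => degA (c i) + ((r i : ℝ) : WithBot ℝ)) := by
  classical
  have hle : ∀ (cc : Fin n → Polynomial k), N (∑ i, cc i • b i)
      ≤ Finset.univ.sup (fun i => degA (cc i) + ((r i : ℝ) : WithBot ℝ)) := by
    intro cc
    refine le_trans (N_sum_le hadd hzero Finset.univ _) ?_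
    exact le_of_eq (Finset.sup_congr rfl (fun i _ => by rw [hsmul, hr]))
  refine le_antisymm (hle c) ?_
  set M := Finset.univ.sup (fun i => degA (c i) + ((r i : ℝ) : WithBot ℝ)) with hM
  rcases eq_or_ne M ⊥ with hMb | hMne
  · rw [hMb]; exact bot_le
  have hune : (Finset.univ : Finset (Fin n)).Nonempty := by
    rcases (Finset.univ : Finset (Fin n)).eq_empty_or_nonempty with h | h
    · exact absurd (by rw [hM, h, Finset.sup_empty]) hMne
    · exact h
  set S := Finset.univ.filter
    (fun i => degA (c i) + ((r i : ℝ) : WithBot ℝ) = M) with hS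
  have hSne : S.Nonempty := by
    obtain ⟨i, _, hi⟩ := Finset.exists_mem_eq_sup Finset.univ hune
      (fun i => degA (c i) + ((r i : ℝ) : WithBot ℝ))
    exact ⟨i, by simp [hS, ← hi, hM]⟩
  obtain ⟨j, hjS, hjmin⟩ := Finset.exists_min_image S (fun i => (c i).natDegree) hSne
  have hjM : degA (c j) + ((r j : ℝ) : WithBot ℝ) = M := by
    have := (Finset.mem_filter.1 hjS).2
    exact this
  have hcj : c j ≠ 0 := by
    intro h
    exact hMne (by rw [← hjM, h, degA_zero, WithBot.bot_add])
  set d := (c j).natDegree with hd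
  have hMval : M = ((((d : ℝ) + r j : ℝ)) : WithBot ℝ) := by
    rw [← hjM, degA_of_ne hcj, ← WithBot.coe_add, ← hd]
  set qq : Fin n → Polynomial k := fun i => c i /ₘ (X^d) with hq
  set sr : Fin n → Polynomial k := fun i => c i %ₘ (X^d) with hsr
  have hmon : (X^d : Polynomial k).Monic := monic_X_pow d
  have hdecomp : ∀ i, c i = X^d * qq i + sr i := by
    intro i
    have h := modByMonic_add_div (c i) (X^d : Polynomial k)
    rw [hq, hsr]
    linear_combination (h.symm)
  have hv : ∑ i, c i • b i = (X^d : Polynomial k) • (∑ i, qq i • b i) + ∑ i, sr i • b i := by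
    rw [Finset.smul_sum, ← Finset.sum_add_distrib]
    apply Finset.sum_congr rfl
    intro i _
    rw [smul_smul, ← add_smul, ← hdecomp i]
  have hqj : qq j ≠ 0 := by
    rw [hq]
    intro h0
    have h1 := (divByMonic_eq_zero_iff hmon).1 h0
    rw [degree_X_pow, degree_eq_natDegree hcj, ← hd] at h1
    exact absurd h1 (lt_irrefl _)
  have hNu : ((r j : ℝ) : WithBot ℝ) ≤ N (∑ i, qq i • b i) :=
    hkey _ qq 1 one_ne_zero (one_smul _ _) j hqj
  have hNune : N (∑ i, qq i • b i) ≠ ⊥ := by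
    intro h
    rw [h] at hNu
    exact absurd hNu (by simp)
  obtain ⟨ρ, hρ⟩ := WithBot.ne_bot_iff_exists.1 hNune
  have hρge : r j ≤ ρ := by
    rw [← hρ, WithBot.coe_le_coe] at hNu
    exact hNu
  have hXu : N ((X^d : Polynomial k) • ∑ i, qq i • b i)
      = ((((d:ℝ) + ρ : ℝ)) : WithBot ℝ) := by
    rw [hsmul, degA_X_pow, ← hρ, ← WithBot.coe_add]
  have hMle : M ≤ N ((X^d : Polynomial k) • ∑ i, qq i • b i) := by
    rw [hXu, hMval, WithBot.coe_le_coe]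
    linarith
  have hz : N (∑ i, sr i • b i) < M := by
    refine lt_of_le_of_lt (hle sr) ?_
    rw [Finset.sup_lt_iff (bot_lt_iff_ne_bot.2 hMne)]
    intro i _
    rcases eq_or_ne (sr i) 0 with h0 | h0
    · rw [h0, degA_zero, WithBot.bot_add]
      exact bot_lt_iff_ne_bot.2 hMne
    have hci : c i ≠ 0 := by
      intro h
      rw [hsr] at h0
      simp only [h, zero_modByMonic] at h0
      exact h0 rfl
    have hdegsi : (sr i).natDegree < d := by
      have h1 := degree_modByMonic_lt (c i) hmon
      rw [degree_X_pow] at h1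
      rw [hsr] at h0 ⊢
      rw [degree_eq_natDegree h0] at h1
      exact_mod_cast h1
    by_cases hiS : i ∈ S
    · have hdi : d ≤ (c i).natDegree := hjmin i hiS
      have hiM : degA (c i) + ((r i : ℝ) : WithBot ℝ) = M := (Finset.mem_filter.1 hiS).2
      rw [degA_of_ne h0, ← WithBot.coe_add, ← hiM, degA_of_ne hci, ← WithBot.coe_add,
        WithBot.coe_lt_coe]
      have h2 : (sr i).natDegree < (c i).natDegree := lt_of_lt_of_le hdegsi hdi
      have h3 : ((sr i).natDegree : ℝ) < ((c i).natDegree : ℝ) := by exact_mod_cast h2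
      linarith
    · have hlt2 : degA (c i) + ((r i : ℝ) : WithBot ℝ) < M := by
        refine lt_of_le_of_ne ?_ ?_
        · rw [hM]; exact Finset.le_sup (f := fun i => degA (c i) + ((r i : ℝ) : WithBot ℝ)) (Finset.mem_univ i)
        · intro h
          exact hiS (by simp [hS, h])
      refine lt_of_le_of_lt ?_ hlt2
      rw [degA_of_ne h0, degA_of_ne hci, ← WithBot.coe_add, ← WithBot.coe_add,
        WithBot.coe_le_coe]
      have h4 : (sr i).natDegree ≤ (c i).natDegree := by
        by_cases hc : (c i).natDegree < d
        · have h5 : c i %ₘ X^d = c i := by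
            rw [Polynomial.modByMonic_eq_self_iff hmon, degree_X_pow,
              degree_eq_natDegree hci]
            exact_mod_cast hc
          have h6 : sr i = c i := by rw [hsr]; exact h5
          rw [h6]
        · exact le_trans hdegsi.le (not_lt.1 hc)
      have h5 : ((sr i).natDegree : ℝ) ≤ ((c i).natDegree : ℝ) := by exact_mod_cast h4
      linarith
  rw [hv]
  rw [N_add_eq hadd hsmul (lt_of_lt_of_le hz hMle)]
  exact hMle


variable {n : ℕ} {b : Fin n → L}

lemma key {n : ℕ} {b : Fin n → L} (hb : LinearIndependent (Polynomial k) b)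
    {r : Fin n → ℝ} (hr : ∀ i, N (b i) = ((r i : ℝ) : WithBot ℝ)) (hmono : Monotone r)
    (hmin : ∀ (i : Fin n) (x : Fin (i.1 + 1) → L), LinearIndependent (Polynomial k) x →
      ((r i : ℝ) : WithBot ℝ) ≤ Finset.univ.sup (fun j => N (x j)))
    (w : L) (c : Fin n → Polynomial k) (e : Polynomial k) (he : e ≠ 0)
    (hw : e • w = ∑ i, c i • b i) (j : Fin n) (hcj : c j ≠ 0) :
    ((r j : ℝ) : WithBot ℝ) ≤ N w := by
  by_contra hcon
  push_neg at hcon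
  classical
  set T : Finset (Fin n) := Finset.univ.filter (fun i => r i = r j) with hT
  have hjT : j ∈ T := by simp [hT]
  have hTne : T.Nonempty := ⟨j, hjT⟩
  set p : Fin n := T.min' hTne with hp
  have hpT : p ∈ T := T.min'_mem hTne
  have hrp : r p = r j := (Finset.mem_filter.1 hpT).2
  have hpj : (p : ℕ) ≤ (j : ℕ) := T.min'_le j hjT
  have hlt : ∀ i : Fin n, (i : ℕ) < (p : ℕ) → r i < r p := by
    intro i hi
    rcases lt_or_eq_of_le (hmono (le_of_lt hi : i ≤ p)) with h | h
    · exact h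
    · exfalso
      have : i ∈ T := by simp [hT, h.trans hrp]
      exact absurd (T.min'_le i this) (not_le.2 hi)
  set x : Fin ((p : ℕ) + 1) → L :=
    fun l => if h : (l : ℕ) < (p : ℕ) then b ⟨l, lt_trans h p.2⟩ else w with hx
  have hxind : LinearIndependent (Polynomial k) x := by
    rw [Fintype.linearIndependent_iff]
    intro g hg
    have hg2 : ∑ l, (e * g l) • x l = 0 := by
      have := congrArg (fun v => e • v) hg
      simpa [Finset.smul_sum, smul_smul] using this
    rw [Fin.sum_univ_castSucc] at hg2
    have hxlast : x (Fin.last (p : ℕ)) = w := by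
      rw [hx]; exact dif_neg (by simp)
    have hxcs : ∀ l : Fin (p : ℕ), x l.castSucc = b ⟨l, lt_trans l.2 p.2⟩ := by
      intro l
      rw [hx]
      simp only [Fin.coe_castSucc]
      exact dif_pos l.2
    set E : Fin n → Polynomial k := fun i =>
      (if h : (i : ℕ) < (p : ℕ) then e * g ⟨i, Nat.lt_succ_of_lt h⟩ else 0)
        + g (Fin.last (p : ℕ)) * c i with hE
    have hEsum : ∑ i, E i • b i = 0 := by
      have e1 : ∑ i, E i • b i
          = (∑ i : Fin n, (if h : (i : ℕ) < (p : ℕ) then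
              e * g ⟨i, Nat.lt_succ_of_lt h⟩ else 0) • b i)
            + ∑ i, (g (Fin.last (p : ℕ)) * c i) • b i := by
        rw [← Finset.sum_add_distrib]
        exact Finset.sum_congr rfl (fun i _ => by rw [hE, add_smul])
      have e2 : (∑ i : Fin n, (if h : (i : ℕ) < (p : ℕ) then
              e * g ⟨i, Nat.lt_succ_of_lt h⟩ else 0) • b i)
          = ∑ l : Fin (p : ℕ), (e * g l.castSucc) • x l.castSucc := by
        have e2a : (∑ i : Fin n, (if h : (i : ℕ) < (p : ℕ) then
              e * g ⟨i, Nat.lt_succ_of_lt h⟩ else 0) • b i)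
            = ∑ i : Fin n, (if h : (i : ℕ) < (p : ℕ) then
              (e * g ⟨i, Nat.lt_succ_of_lt h⟩) • b ⟨i, lt_trans h p.2⟩ else 0) := by
          apply Finset.sum_congr rfl
          intro i _
          by_cases h : (i : ℕ) < (p : ℕ)
          · rw [dif_pos h, dif_pos h]
          · rw [dif_neg h, dif_neg h, zero_smul]
        rw [e2a, sum_dite_lt (le_of_lt p.2)
          (fun i hi => (e * g ⟨i, Nat.lt_succ_of_lt hi⟩) • b ⟨i, lt_trans hi p.2⟩)]
        apply Finset.sum_congr rfl
        intro l _
        rw [hxcs l]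
        congr 1
      have e3 : ∑ i, (g (Fin.last (p : ℕ)) * c i) • b i
          = (e * g (Fin.last (p : ℕ))) • x (Fin.last (p : ℕ)) := by
        rw [hxlast]
        rw [show e * g (Fin.last (p : ℕ)) = g (Fin.last (p : ℕ)) * e from mul_comm _ _,
          ← smul_smul, hw, Finset.smul_sum]
        exact (Finset.sum_congr rfl (fun i _ => by rw [smul_smul])).symm
      rw [e1, e2, e3]
      exact hg2
    have hE0 : ∀ i, E i = 0 := Fintype.linearIndependent_iff.1 hb E hEsum
    have hglast : g (Fin.last (p : ℕ)) = 0 := by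
      have := hE0 j
      rw [hE] at this
      simp only [dif_neg (not_lt.2 hpj), zero_add] at this
      exact (mul_eq_zero.1 this).resolve_right hcj
    intro l
    by_cases hl : (l : ℕ) < (p : ℕ)
    · have := hE0 ⟨l, lt_trans hl p.2⟩
      rw [hE] at this
      simp only [dif_pos hl, hglast, zero_mul, add_zero] at this
      have hgl : g ⟨(l : ℕ), Nat.lt_succ_of_lt hl⟩ = 0 :=
        (mul_eq_zero.1 this).resolve_left he
      have : l = ⟨(l : ℕ), Nat.lt_succ_of_lt hl⟩ := Fin.ext rfl
      rw [this]; exact hgl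
    · have hlp : (l : ℕ) = (p : ℕ) := by have := l.2; omega
      have hll : l = Fin.last (p : ℕ) := by
        apply Fin.ext
        rw [Fin.val_last]
        exact hlp
      rw [hll]; exact hglast
  have hminp := hmin p x hxind
  have hsup : Finset.univ.sup (fun l => N (x l)) < ((r p : ℝ) : WithBot ℝ) := by
    rw [Finset.sup_lt_iff (WithBot.bot_lt_coe _)]
    intro l _
    by_cases h : (l : ℕ) < (p : ℕ)
    · rw [hx]
      simp only [dif_pos h]
      rw [hr]
      exact_mod_cast hlt _ h
    · rw [hx]
      simp only [dif_neg h]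
      rw [hrp]
      exact hcon
  exact absurd (lt_of_le_of_lt hminp hsup) (lt_irrefl _)


theorem span_top {n : ℕ} {b : Fin n → L}
    (hadd : ∀ x y : L, N (x + y) ≤ max (N x) (N y))
    (hsmul : ∀ (a : Polynomial k) (x : L), N (a • x) = degA a + N x)
    (hzero : ∀ x : L, N x = ⊥ ↔ x = 0)
    (hb : LinearIndependent (Polynomial k) b)
    (hrank : ¬ ∃ x : Fin (n + 1) → L, LinearIndependent (Polynomial k) x)
    {r : Fin n → ℝ} (hr : ∀ i, N (b i) = ((r i : ℝ) : WithBot ℝ)) (hmono : Monotone r)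
    (hNsum : ∀ {ι : Type} (s : Finset ι) (f : ι → L),
      N (∑ i ∈ s, f i) ≤ s.sup (fun i => N (f i)))
    (hkey : ∀ (w : L) (c : Fin n → Polynomial k) (e : Polynomial k), e ≠ 0 →
      e • w = ∑ i, c i • b i → ∀ j : Fin n, c j ≠ 0 → ((r j : ℝ) : WithBot ℝ) ≤ N w) :
    Submodule.span (Polynomial k) (Set.range b) = ⊤ := by
  classical
  rw [eq_top_iff]
  intro x _
  by_contra hx
  have hdep : ¬ LinearIndependent (Polynomial k) (Fin.snoc b x : Fin (n+1) → L) :=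
    fun h => hrank ⟨_, h⟩
  obtain ⟨g, hg, i0, hi0⟩ := Fintype.not_linearIndependent_iff.1 hdep
  rw [Fin.sum_univ_castSucc] at hg
  simp only [Fin.snoc_castSucc, Fin.snoc_last] at hg
  set e := g (Fin.last n) with he'
  have he : e ≠ 0 := by
    intro h0
    rw [h0, zero_smul, add_zero] at hg
    have hz := Fintype.linearIndependent_iff.1 hb _ hg
    apply hi0
    rcases Fin.eq_castSucc_or_eq_last i0 with ⟨l, hl⟩ | hl
    · rw [hl]; exact hz l
    · rw [hl, ← he']; exact h0
  have hex : e • x = ∑ l : Fin n, (-(g l.castSucc)) • b l := by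
    have h1 : e • x = - ∑ l : Fin n, g l.castSucc • b l :=
      eq_neg_of_add_eq_zero_right hg
    rw [h1, ← Finset.sum_neg_distrib]
    exact Finset.sum_congr rfl (fun l _ => (neg_smul _ _).symm)
  set u := (e.leadingCoeff)⁻¹ with hu
  set e' := e * C u with he''
  have hmon : e'.Monic := monic_mul_leadingCoeff_inv he
  have he'ne : e' ≠ 0 := hmon.ne_zero
  set cc : Fin n → Polynomial k := fun l => C u * (-(g l.castSucc)) with hcc
  have hex' : e' • x = ∑ l, cc l • b l := by
    have h1 : e' • x = C u • (e • x) := by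
      rw [he'', mul_comm, mul_smul]
    rw [h1, hex, Finset.smul_sum]
    exact Finset.sum_congr rfl (fun l _ => by rw [smul_smul])
  set qq : Fin n → Polynomial k := fun i => cc i /ₘ e' with hq
  set sr : Fin n → Polynomial k := fun i => cc i %ₘ e' with hsr
  have hsri : ∀ i, sr i = cc i %ₘ e' := fun _ => rfl
  have hqqi : ∀ i, qq i = cc i /ₘ e' := fun _ => rfl
  set x' := x - ∑ i, qq i • b i with hx'
  have hex'' : e' • x' = ∑ i, sr i • b i := by
    rw [hx', smul_sub, hex', Finset.smul_sum, ← Finset.sum_sub_distrib]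
    apply Finset.sum_congr rfl
    intro i _
    rw [smul_smul, ← sub_smul]
    congr 1
    rw [hsri i, hqqi i]
    have h := modByMonic_add_div (cc i) e'
    linear_combination h.symm
  have hsne : ∃ m, sr m ≠ 0 := by
    by_contra hall
    push_neg at hall
    have h0 : e' • x' = 0 := by
      rw [hex'']
      exact Finset.sum_eq_zero (fun i _ => by rw [hall i, zero_smul])
    have hb0 : N (e' • x') = ⊥ := (hzero _).2 h0
    rw [hsmul, degA_of_ne he'ne] at hb0
    have hxb : N x' = ⊥ := by
      rcases WithBot.add_eq_bot.1 hb0 with h | h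
      · exact absurd h (WithBot.coe_ne_bot)
      · exact h
    have hx0 : x' = 0 := (hzero _).1 hxb
    apply hx
    have : x = ∑ i, qq i • b i := by
      have := sub_eq_zero.1 (hx' ▸ hx0)
      exact this
    rw [this]
    exact Submodule.sum_mem _
      (fun l _ => Submodule.smul_mem _ _ (Submodule.subset_span ⟨l, rfl⟩))
  set T' := Finset.univ.filter (fun i => sr i ≠ 0) with hT'
  have hT'ne : T'.Nonempty := by
    obtain ⟨m, hm⟩ := hsne
    exact ⟨m, by simp [hT', hm]⟩
  set m := T'.max' hT'ne with hm
  have hsm : sr m ≠ 0 := by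
    have h1 : m ∈ T' := T'.max'_mem hT'ne
    exact (Finset.mem_filter.1 h1).2
  have hkm : ((r m : ℝ) : WithBot ℝ) ≤ N x' := hkey x' sr e' he'ne hex'' m hsm
  have hNx'ne : N x' ≠ ⊥ := by
    intro h
    rw [h] at hkm
    exact absurd hkm (by simp)
  obtain ⟨ρ, hρ⟩ := WithBot.ne_bot_iff_exists.1 hNx'ne
  have hρge : r m ≤ ρ := by
    rw [← hρ, WithBot.coe_le_coe] at hkm
    exact hkm
  set D := e'.natDegree with hD
  have hble : N (e' • x') ≤ (((D : ℝ) - 1 + r m : ℝ) : WithBot ℝ) := by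
    rw [hex'']
    refine le_trans (hNsum _ _) ?_
    apply Finset.sup_le
    intro i _
    rw [hsmul, hr]
    rcases eq_or_ne (sr i) 0 with h0 | h0
    · rw [h0, degA_zero, WithBot.bot_add]; exact bot_le
    · have him : i ≤ m := T'.le_max' i (by simp [hT', h0])
      have hri : r i ≤ r m := hmono him
      have hdeg : (sr i).natDegree < D := by
        have h1 := degree_modByMonic_lt (cc i) hmon
        rw [← hsri i, degree_eq_natDegree h0, degree_eq_natDegree he'ne, ← hD] at h1
        exact_mod_cast h1
      rw [degA_of_ne h0, ← WithBot.coe_add, WithBot.coe_le_coe]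
      have h2 : ((sr i).natDegree : ℝ) + 1 ≤ (D : ℝ) := by exact_mod_cast hdeg
      linarith
  have hval : N (e' • x') = ((((D:ℝ) + ρ : ℝ)) : WithBot ℝ) := by
    rw [hsmul, degA_of_ne he'ne, ← hρ, ← WithBot.coe_add, ← hD]
  rw [hval, WithBot.coe_le_coe] at hble
  linarith


end Stmt7Aux

/-- In a lattice `(L,‖·‖)` over `A = k[t]` of rank `n`, any `A`-linearly
independent family `b₁,…,b_n` whose lengths attain the successive minima `r₁ ≤ ⋯ ≤ r_n`
is a reduced basis of `L`: it generates `L` and is reduced. -/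
theorem stmt7 {k : Type*} [Field k] {L : Type*} [AddCommGroup L]
    [Module (Polynomial k) L] [Module k L] [IsScalarTower k (Polynomial k) L]
    [Module.Finite (Polynomial k) L]
    (N : L → WithBot ℝ)
    (hadd : ∀ x y : L, N (x + y) ≤ max (N x) (N y))
    (hsmul : ∀ (a : Polynomial k) (x : L), N (a • x) = degA a + N x)
    (hzero : ∀ x : L, N x = ⊥ ↔ x = 0)
    (hfin : ∀ r : ℝ, ∃ S : Finset L,
      {x : L | N x ≤ (r : ℝ)} ⊆ (Submodule.span k (S : Set L) : Set L))
    (n : ℕ) (b : Fin n → L) (hb : LinearIndependent (Polynomial k) b)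
    (hrank : ¬ ∃ x : Fin (n + 1) → L, LinearIndependent (Polynomial k) x)
    (r : Fin n → ℝ) (hr : ∀ i, N (b i) = ((r i : ℝ) : WithBot ℝ)) (hmono : Monotone r)
    (hmin : ∀ (i : Fin n) (x : Fin (i.1 + 1) → L), LinearIndependent (Polynomial k) x →
      ((r i : ℝ) : WithBot ℝ) ≤ Finset.univ.sup (fun j => N (x j))) :
    Submodule.span (Polynomial k) (Set.range b) = ⊤ ∧
    ∀ a : Fin n → Polynomial k,
      N (∑ i, a i • b i) = Finset.univ.sup (fun i => degA (a i) + N (b i)) := by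
  constructor
  · exact Stmt7Aux.span_top hadd hsmul hzero hb hrank hr hmono
      (fun s f => Stmt7Aux.N_sum_le hadd hzero s f)
      (fun w c e he hw j hcj => Stmt7Aux.key hb hr hmono hmin w c e he hw j hcj)
  · intro a
    have h1 : (Finset.univ.sup fun i => degA (a i) + N (b i))
        = Finset.univ.sup (fun i => degA (a i) + ((r i : ℝ) : WithBot ℝ)) :=
      Finset.sup_congr rfl (fun i _ => by rw [hr])
    rw [h1]
    exact Stmt7Aux.reduced hadd hsmul hzero hb hr hmono hmin
      (fun w c e he hw j hcj => Stmt7Aux.key hb hr hmono hmin w c e he hw j hcj) a
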